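/- Monotonicity of full interruptions in the switch set: if A_s ⊆ A_s′ then for every node i, u_i(A_s′) ≤ u_i(A_s); i.e., adding switches cannot increase the full interruption of any node. Consequently, ENS(A_s′) ≤ ENS(A_s). -/

import Mathlib

open scoped Classical BigOperators

/-- A finite arborescence: every node has a parent, the root is its own parent,
and every node reaches the root by iterating `parent`.  The arcs of the tree are
the pairs `(parent j, j)` for non-root `j`. -/
structure Arbor (V : Type*) where
  root : V
  parent : V → V
  parent_root : parent root = root
  reaches_root : ∀ v : V, ∃ n : ℕ, parent^[n] v = root

variable {V : Type*}

/-- `T.desc j i` : node `i` belongs to the subtree rooted at `j`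
(equivalently, `j` lies on the directed path from the root to `i`). -/
def Arbor.desc (T : Arbor V) (j i : V) : Prop := ∃ n : ℕ, T.parent^[n] i = j

/-- The children of node `i`. -/
noncomputable def Arbor.children [Fintype V] (T : Arbor V) (i : V) : Finset V :=
  Finset.univ.filter fun j => j ≠ T.root ∧ T.parent j = i

/-- The subtree rooted at `j`, as a finset (the set `V_j`). -/
noncomputable def Arbor.subtree [Fintype V] (T : Arbor V) (j : V) : Finset V :=
  Finset.univ.filter fun i => T.desc j i

/-- The node set of the unique directed path from the root to `j` (the set `path(0,j)`). -/
noncomputable def Arbor.pathSet [Fintype V] (T : Arbor V) (j : V) : Finset V :=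
  Finset.univ.filter fun i => T.desc i j

/-- The arcs of the tree, each arc `(parent j, j)` identified with its head `j ≠ root`. -/
noncomputable def Arbor.arcs [Fintype V] (T : Arbor V) : Finset V :=
  Finset.univ.filter fun j => j ≠ T.root

namespace Arbor

lemma root_fixed (T : Arbor V) (n : ℕ) : T.parent^[n] T.root = T.root :=
  Function.iterate_fixed T.parent_root n

lemma eq_root_of_cycle (T : Arbor V) {x : V} {n : ℕ} (hn : 0 < n)
    (h : T.parent^[n] x = x) : x = T.root := by
  obtain ⟨m, hm⟩ := T.reaches_root x
  have h1 : T.parent^[n * m] x = x := by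
    rw [Function.iterate_mul]; exact Function.iterate_fixed h m
  have h3 : n * m - m + m = n * m :=
    Nat.sub_add_cancel (Nat.le_mul_of_pos_left m hn)
  calc x = T.parent^[n * m] x := h1.symm
    _ = T.parent^[n * m - m] (T.parent^[m] x) := by
        rw [← Function.iterate_add_apply, h3]
    _ = T.root := by rw [hm, T.root_fixed]

lemma mem_children [Fintype V] (T : Arbor V) {i j : V} :
    j ∈ T.children i ↔ j ≠ T.root ∧ T.parent j = i := by
  simp [children]

lemma subtree_card_lt [Fintype V] (T : Arbor V) {i j : V} (hj : j ∈ T.children i) :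
    (T.subtree j).card < (T.subtree i).card := by
  obtain ⟨hjr, hji⟩ := T.mem_children.mp hj
  apply Finset.card_lt_card
  have hsub : T.subtree j ⊆ T.subtree i := by
    intro k hk
    obtain ⟨n, hn⟩ : T.desc j k := by simpa [subtree] using hk
    simp only [subtree, Finset.mem_filter, Finset.mem_univ, true_and]
    exact ⟨n + 1, by rw [Function.iterate_succ_apply', hn, hji]⟩
  rw [Finset.ssubset_iff_of_subset hsub]
  refine ⟨i, Finset.mem_filter.mpr ⟨Finset.mem_univ _, 0, rfl⟩, ?_⟩
  intro hmem
  obtain ⟨t, ht⟩ : T.desc j i := by simpa [subtree] using hmem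
  have hcyc : T.parent^[t + 1] i = i := by
    rw [Function.iterate_succ_apply', ht, hji]
  have hiroot : i = T.root := T.eq_root_of_cycle (Nat.succ_pos t) hcyc
  exact hjr (by rw [← ht, hiroot, T.root_fixed])

/-- `k` can be reached from `i` going down the tree without crossing a switch
(no node of the path after `i` is a switch). -/
def opento (T : Arbor V) (S : V → Prop) (i k : V) : Prop :=
  ∃ n, T.parent^[n] k = i ∧ ∀ m < n, ¬ S (T.parent^[m] k)

noncomputable def oset [Fintype V] (T : Arbor V) (S : V → Prop) (i : V) : Finset V :=
  Finset.univ.filter fun k => T.opento S i k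

lemma mem_oset [Fintype V] (T : Arbor V) {S : V → Prop} {i k : V} :
    k ∈ T.oset S i ↔ T.opento S i k := by simp [oset]

lemma oset_step_aux [Fintype V] (T : Arbor V) {S : V → Prop} {i j : V}
    {a : ℕ} (hja : j ∈ (T.children i).filter (fun j => ¬ S j))
    (ha : T.parent^[a] i = j) : False := by
  obtain ⟨hjc, _⟩ := Finset.mem_filter.mp hja
  obtain ⟨hjr, hjp⟩ := T.mem_children.mp hjc
  have hcyc : T.parent^[a + 1] i = i := by
    rw [Function.iterate_succ_apply', ha, hjp]
  have hiroot : i = T.root := T.eq_root_of_cycle (Nat.succ_pos a) hcyc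
  exact hjr (by rw [← ha, hiroot, T.root_fixed])

lemma sum_oset [Fintype V] (T : Arbor V) (S : V → Prop) (θ : V → ℝ) (i : V) :
    ∑ k ∈ T.oset S i, θ k
      = θ i + ∑ j ∈ (T.children i).filter (fun j => ¬ S j), ∑ k ∈ T.oset S j, θ k := by
  set B := (T.children i).filter (fun j => ¬ S j) with hB
  -- no descendant of a (filtered) child equals `i`
  have hkey : ∀ j ∈ B, ∀ a : ℕ, T.parent^[a] i ≠ j := by
    intro j hj a ha
    exact T.oset_step_aux hj ha
  have hdecomp : T.oset S i = insert i (B.biUnion (T.oset S)) := by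
    ext k
    simp only [Finset.mem_insert, Finset.mem_biUnion]
    constructor
    · intro hk
      obtain ⟨n, hn, hns⟩ := T.mem_oset.mp hk
      by_cases hki : k = i
      · exact Or.inl hki
      · right
        have hex : ∃ n, T.parent^[n] k = i := ⟨n, hn⟩
        set n₁ := Nat.find hex with hn₁def
        have hn₁ : T.parent^[n₁] k = i := Nat.find_spec hex
        have hn₁le : n₁ ≤ n := Nat.find_min' hex hn
        have hn₁0 : n₁ ≠ 0 := by
          intro h0; apply hki; simpa [h0] using hn₁
        set j := T.parent^[n₁ - 1] k with hjdef
        have hjp : T.parent j = i := by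
          have h' : T.parent^[n₁ - 1 + 1] k = i := by
            rw [Nat.sub_add_cancel (Nat.one_le_iff_ne_zero.mpr hn₁0)]; exact hn₁
          rw [Function.iterate_succ_apply'] at h'
          rw [hjdef]; exact h'
        have hjr : j ≠ T.root := by
          intro hjroot
          have : i = T.root := by rw [← hjp, hjroot, T.parent_root]
          exact Nat.find_min hex (m := n₁ - 1) (by omega) (by rw [← hjdef, hjroot, ← this])
        have hjS : ¬ S j := hns (n₁ - 1) (by omega)
        refine ⟨j, Finset.mem_filter.mpr ⟨T.mem_children.mpr ⟨hjr, hjp⟩, hjS⟩, ?_⟩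
        exact T.mem_oset.mpr ⟨n₁ - 1, rfl, fun m hm => hns m (by omega)⟩
    · rintro (rfl | ⟨j, hj, hk⟩)
      · exact T.mem_oset.mpr ⟨0, rfl, fun m hm => absurd hm (Nat.not_lt_zero m)⟩
      · obtain ⟨hjc, hjS⟩ := Finset.mem_filter.mp hj
        obtain ⟨hjr, hjp⟩ := T.mem_children.mp hjc
        obtain ⟨n, hn, hns⟩ := T.mem_oset.mp hk
        refine T.mem_oset.mpr ⟨n + 1, by rw [Function.iterate_succ_apply', hn, hjp], ?_⟩
        intro m hm
        rcases Nat.lt_succ_iff_lt_or_eq.mp hm with hlt | heq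
        · exact hns m hlt
        · rw [heq, hn]; exact hjS
  have hnotmem : i ∉ B.biUnion (T.oset S) := by
    intro hmem
    obtain ⟨j, hj, hij⟩ := Finset.mem_biUnion.mp hmem
    obtain ⟨a, ha, -⟩ := T.mem_oset.mp hij
    exact hkey j hj a ha
  have hdisj : (↑B : Set V).PairwiseDisjoint (T.oset S) := by
    intro j1 hj1 j2 hj2 hne
    simp only [Function.onFun]
    rw [Finset.disjoint_left]
    intro k hk1 hk2
    obtain ⟨a, ha, -⟩ := T.mem_oset.mp hk1
    obtain ⟨b, hb, -⟩ := T.mem_oset.mp hk2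
    have haux : ∀ (x y : V) (c d : ℕ), x ∈ B → y ∈ B → c < d →
        T.parent^[c] k = x → T.parent^[d] k = y → False := by
      intro x y c d hx hy hcd hc hd
      have hxy : T.parent^[d - c] x = y := by
        rw [← hc, ← Function.iterate_add_apply, Nat.sub_add_cancel hcd.le, hd]
      obtain ⟨hxc, _⟩ := Finset.mem_filter.mp hx
      obtain ⟨hxr, hxp⟩ := T.mem_children.mp hxc
      have h1 : T.parent^[d - c - 1] i = y := by
        have h2 : T.parent^[d - c - 1 + 1] x = y := by
          rwa [show d - c - 1 + 1 = d - c by omega]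
        rw [Function.iterate_succ_apply, hxp] at h2
        exact h2
      exact hkey y hy _ h1
    rcases lt_trichotomy a b with h | h | h
    · exact haux j1 j2 a b (by simpa using hj1) (by simpa using hj2) h ha hb
    · exact hne (by rw [← ha, ← hb, h])
    · exact haux j2 j1 b a (by simpa using hj2) (by simpa using hj1) h hb ha
  rw [hdecomp, Finset.sum_insert hnotmem, Finset.sum_biUnion hdisj]

lemma theta_closed [Fintype V] (T : Arbor V) (S : V → Prop) (θ f : V → ℝ)
    (hf : ∀ i, f i = θ i + ∑ j ∈ (T.children i).filter (fun j => ¬ S j), f j) (i : V) :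
    f i = ∑ k ∈ T.oset S i, θ k := by
  have H : ∀ n i, (T.subtree i).card ≤ n → f i = ∑ k ∈ T.oset S i, θ k := by
    intro n
    induction n with
    | zero =>
      intro i hi
      have : i ∈ T.subtree i := by
        simp only [subtree, Finset.mem_filter, Finset.mem_univ, true_and]
        exact ⟨0, rfl⟩
      have := Finset.card_pos.mpr ⟨i, this⟩
      omega
    | succ n ih =>
      intro i hi
      rw [hf i, T.sum_oset S θ i]
      congr 1
      apply Finset.sum_congr rfl
      intro j hj
      exact ih j (by
        have := T.subtree_card_lt (Finset.mem_filter.mp hj).1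
        omega)
  exact H _ i le_rfl

lemma mnode_ex (T : Arbor V) (S : V → Prop) (k : V) :
    ∃ n, T.parent^[n] k = T.root ∨ S (T.parent^[n] k) := by
  obtain ⟨n, hn⟩ := T.reaches_root k; exact ⟨n, Or.inl hn⟩

/-- The deepest ancestor of `k` which is the root or a switch. -/
noncomputable def mnode (T : Arbor V) (S : V → Prop) (k : V) : V :=
  T.parent^[Nat.find (T.mnode_ex S k)] k

lemma mnode_def (T : Arbor V) (S : V → Prop) (k : V) :
    T.mnode S k = T.parent^[Nat.find (T.mnode_ex S k)] k := rfl

lemma mnode_or (T : Arbor V) (S : V → Prop) (k : V) :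
    T.mnode S k = T.root ∨ S (T.mnode S k) := Nat.find_spec (T.mnode_ex S k)

lemma mnode_eq_iff (T : Arbor V) {S : V → Prop} {i k : V} (hiS : i = T.root ∨ S i) :
    T.mnode S k = i ↔ T.opento S i k := by
  constructor
  · intro h
    refine ⟨Nat.find (T.mnode_ex S k), h, fun m hm => ?_⟩
    have := Nat.find_min (T.mnode_ex S k) hm
    tauto
  · rintro ⟨n, hn, hns⟩
    have hcond : T.parent^[n] k = T.root ∨ S (T.parent^[n] k) := by
      rw [hn]; exact hiS
    have hle : Nat.find (T.mnode_ex S k) ≤ n := Nat.find_min' _ hcond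
    rcases Nat.find_spec (T.mnode_ex S k) with hroot | hS
    · have hroot' : T.parent^[Nat.find (T.mnode_ex S k)] k = T.root := by
        rw [← T.mnode_def]; exact hroot
      have hnn : T.parent^[n] k = T.root := by
        rw [show n = (n - Nat.find (T.mnode_ex S k)) + Nat.find (T.mnode_ex S k) by omega,
          Function.iterate_add_apply, hroot', T.root_fixed]
      have hir : i = T.root := by rw [← hn]; exact hnn
      rw [T.mnode_def, hroot', hir]
    · have heq : Nat.find (T.mnode_ex S k) = n := by
        rcases lt_or_eq_of_le hle with hlt | heq
        · exact absurd hS (hns _ hlt)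
        · exact heq
      rw [T.mnode_def, heq, hn]

noncomputable def mset [Fintype V] (T : Arbor V) (S : V → Prop) (i : V) : Finset V :=
  Finset.univ.filter fun k => T.desc (T.mnode S k) i

lemma mem_mset [Fintype V] (T : Arbor V) {S : V → Prop} {i k : V} :
    k ∈ T.mset S i ↔ ∃ t, T.parent^[t] i = T.mnode S k := by
  unfold mset
  rw [Finset.mem_filter]
  exact ⟨fun h => h.2, fun h => ⟨Finset.mem_univ _, h⟩⟩

lemma depth_parent_lt (T : Arbor V) {i : V} (hi : i ≠ T.root) :
    Nat.find (T.reaches_root (T.parent i)) < Nat.find (T.reaches_root i) := by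
  have hd : T.parent^[Nat.find (T.reaches_root i)] i = T.root :=
    Nat.find_spec (T.reaches_root i)
  have hd0 : Nat.find (T.reaches_root i) ≠ 0 := by
    intro h0; apply hi; simpa [h0] using hd
  have : T.parent^[Nat.find (T.reaches_root i) - 1] (T.parent i) = T.root := by
    rw [← Function.iterate_succ_apply, Nat.succ_eq_add_one,
      Nat.sub_add_cancel (Nat.one_le_iff_ne_zero.mpr hd0)]
    exact hd
  have := Nat.find_min' (T.reaches_root (T.parent i)) this
  omega

lemma u_closed [Fintype V] (T : Arbor V) (S : V → Prop) (θ f u : V → ℝ)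
    (hf : ∀ i, f i = θ i + ∑ j ∈ (T.children i).filter (fun j => ¬ S j), f j)
    (hu0 : u T.root = f T.root)
    (hu : ∀ j, j ≠ T.root → u j = u (T.parent j) + (if S j then f j else 0)) (i : V) :
    u i = ∑ k ∈ T.mset S i, θ k := by
  have hroot : u T.root = ∑ k ∈ T.mset S T.root, θ k := by
    have hms : T.mset S T.root = T.oset S T.root := by
      ext k
      rw [T.mem_mset, T.mem_oset]
      constructor
      · rintro ⟨t, ht⟩
        rw [← (T.mnode_eq_iff (Or.inl rfl))]
        rw [T.root_fixed] at ht; exact ht.symm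
      · intro h
        exact ⟨0, ((T.mnode_eq_iff (Or.inl rfl)).mpr h).symm⟩
    rw [hu0, hms, T.theta_closed S θ f hf]
  have H : ∀ n i, Nat.find (T.reaches_root i) ≤ n → u i = ∑ k ∈ T.mset S i, θ k := by
    intro n
    induction n with
    | zero =>
      intro i hi
      have h0 : Nat.find (T.reaches_root i) = 0 := by omega
      have : i = T.root := by
        have := Nat.find_spec (T.reaches_root i); rwa [h0] at this
      rw [this]; exact hroot
    | succ n ih =>
      intro i hi
      by_cases hir : i = T.root
      · rw [hir]; exact hroot
      · have hihp : u (T.parent i) = ∑ k ∈ T.mset S (T.parent i), θ k := by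
          apply ih
          have := T.depth_parent_lt hir
          omega
        rw [hu i hir, hihp]
        by_cases hSi : S i
        · rw [if_pos hSi]
          have hset : T.mset S i = T.mset S (T.parent i) ∪ T.oset S i := by
            ext k
            rw [T.mem_mset, Finset.mem_union, T.mem_mset, T.mem_oset]
            constructor
            · rintro ⟨t, ht⟩
              match t, ht with
              | 0, ht =>
                right
                exact (T.mnode_eq_iff (Or.inr hSi)).mp ht.symm
              | (s+1), ht =>
                left
                exact ⟨s, by rwa [Function.iterate_succ_apply] at ht⟩
            · rintro (⟨t, ht⟩ | hop)
              · exact ⟨t + 1, by rwa [Function.iterate_succ_apply]⟩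
              · exact ⟨0, ((T.mnode_eq_iff (Or.inr hSi)).mpr hop).symm⟩
          have hdisj : Disjoint (T.mset S (T.parent i)) (T.oset S i) := by
            rw [Finset.disjoint_left]
            intro k hk1 hk2
            obtain ⟨t, ht⟩ := T.mem_mset.mp hk1
            have hmi : T.mnode S k = i := (T.mnode_eq_iff (Or.inr hSi)).mpr (T.mem_oset.mp hk2)
            rw [hmi] at ht
            have hcyc : T.parent^[t + 1] i = i := by
              rwa [Function.iterate_succ_apply]
            exact hir (T.eq_root_of_cycle (Nat.succ_pos t) hcyc)
          rw [hset, Finset.sum_union hdisj, T.theta_closed S θ f hf]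
        · rw [if_neg hSi, add_zero]
          congr 1
          ext k
          rw [T.mem_mset, T.mem_mset]
          constructor
          · rintro ⟨t, ht⟩
            exact ⟨t + 1, by rwa [Function.iterate_succ_apply]⟩
          · rintro ⟨t, ht⟩
            match t, ht with
            | 0, ht =>
              exfalso
              have hti : i = T.mnode S k := ht
              rcases T.mnode_or S k with h | h
              · exact hir (by rw [hti]; exact h)
              · exact hSi (by rw [hti]; exact h)
            | (s+1), ht =>
              exact ⟨s, by rwa [Function.iterate_succ_apply] at ht⟩
  exact H _ i le_rfl

lemma mset_mono [Fintype V] (T : Arbor V) {S S' : V → Prop} (h : ∀ v, S v → S' v) (i : V) :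
    T.mset S' i ⊆ T.mset S i := by
  intro k hk
  obtain ⟨t, ht⟩ := T.mem_mset.mp hk
  have hle : Nat.find (T.mnode_ex S' k) ≤ Nat.find (T.mnode_ex S k) := by
    apply Nat.find_min'
    rcases Nat.find_spec (T.mnode_ex S k) with hr | hs
    · exact Or.inl hr
    · exact Or.inr (h _ hs)
  have hrel : T.parent^[Nat.find (T.mnode_ex S k) - Nat.find (T.mnode_ex S' k)]
      (T.mnode S' k) = T.mnode S k := by
    rw [T.mnode_def, T.mnode_def, ← Function.iterate_add_apply, Nat.sub_add_cancel hle]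
  refine T.mem_mset.mpr ⟨(Nat.find (T.mnode_ex S k) - Nat.find (T.mnode_ex S' k)) + t, ?_⟩
  rw [Function.iterate_add_apply, ht, hrel]

end Arbor

/-- adding switches cannot increase any full interruption,
and consequently cannot increase the ENS. -/
theorem full_interruption_antitone_in_switches [Fintype V] (T : Arbor V)
    (As As' : V → Prop) (hAs : ∀ v, As v → As' v)
    (l θ θt θt' u u' : V → ℝ)
    (hl : ∀ i, 0 ≤ l i) (hθ : ∀ i, 0 ≤ θ i)
    (hrec : ∀ i, θt i = θ i + ∑ j ∈ (T.children i).filter (fun j => ¬ As j), θt j)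
    (hrec' : ∀ i, θt' i = θ i + ∑ j ∈ (T.children i).filter (fun j => ¬ As' j), θt' j)
    (hu0 : u T.root = θt T.root)
    (hu : ∀ j, j ≠ T.root → u j = u (T.parent j) + (if As j then θt j else 0))
    (hu0' : u' T.root = θt' T.root)
    (hu' : ∀ j, j ≠ T.root → u' j = u' (T.parent j) + (if As' j then θt' j else 0)) :
    (∀ i, u' i ≤ u i) ∧ (∑ i, l i * u' i) ≤ (∑ i, l i * u i) := by
  have h1 : ∀ i, u i = ∑ k ∈ T.mset As i, θ k := T.u_closed As θ θt u hrec hu0 hu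
  have h1' : ∀ i, u' i = ∑ k ∈ T.mset As' i, θ k := T.u_closed As' θ θt' u' hrec' hu0' hu'
  have hmain : ∀ i, u' i ≤ u i := by
    intro i
    rw [h1 i, h1' i]
    exact Finset.sum_le_sum_of_subset_of_nonneg (T.mset_mono hAs i) fun k _ _ => hθ k
  exact ⟨hmain, Finset.sum_le_sum fun i _ => mul_le_mul_of_nonneg_left (hmain i) (hl i)⟩
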